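/- Let X be a nonempty topological space having exactly m irreducible components X_1, …, X_m, and let σ : X → X be a homeomorphism. Then σ is wild if and only if the permutation of {X_1, …, X_m} induced by σ is a single m-cycle and σ^m restricts to a wild homeomorphism of each component X_i. Moreover, if σ is wild then the components X_1, …, X_m are pairwise disjoint. -/

import Mathlib

/-!
STATEMENT 10: Let `X` be a nonempty topological space having exactly `m` irreducible
components `X_1, …, X_m`, and let `σ : X → X` be a homeomorphism.  Then `σ` is wild iff
the permutation of `{X_1, …, X_m}` induced by `σ` is a single `m`-cycle and `σ^m`
restricts to a wild homeomorphism of each component `X_i`.  Moreover, if `σ` is wild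
then the components `X_1, …, X_m` are pairwise disjoint.

Notes on the rendering:
* `σ` is wild iff `σ(Y) ≠ Y` for every closed `Y` with `∅ ≠ Y ⊊ X`.
* A permutation of the `m`-element set of components is a single `m`-cycle iff it acts
  transitively on the components, i.e. every component is carried to every other one by
  some power of `σ`.
* Irreducible components are closed, so a subset of a component is closed in the
  subspace topology iff it is closed in `X`; wildness of the restriction of `σ^m`
  (= the `m`-th iterate of `σ`) to a component is expressed accordingly.
-/

/-- A self-map of `X` is *wild on `S`* if it moves every closed set `Y` with
`∅ ≠ Y ⊊ S`. -/
def WildOn {X : Type*} [TopologicalSpace X] (f : X → X) (S : Set X) : Prop :=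
  ∀ Y : Set X, Y ⊆ S → IsClosed Y → Y.Nonempty → Y ≠ S → f '' Y ≠ Y

/-- A homeomorphism `σ : X ≃ₜ X` is *wild* if `σ(Y) ≠ Y` for every closed set `Y` with
`∅ ≠ Y ⊊ X`. -/
def IsWild {X : Type*} [TopologicalSpace X] (σ : X ≃ₜ X) : Prop :=
  WildOn σ Set.univ

/-- An irreducible set contained in a finite union of closed sets is contained
in one of them. -/
lemma irr_subset_of_subset_biUnion {X : Type*} [TopologicalSpace X] {s : Set X}
    (hs : IsIrreducible s) {ι : Type*} (F : Finset ι) (f : ι → Set X)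
    (hf : ∀ i, IsClosed (f i)) (h : s ⊆ ⋃ i ∈ F, f i) :
    ∃ i ∈ F, s ⊆ f i := by
  classical
  induction F using Finset.induction_on with
  | empty =>
    simp only [Finset.notMem_empty, Set.iUnion_of_empty, Set.iUnion_empty] at h
    exact absurd (h hs.1.choose_spec) (Set.notMem_empty _)
  | @insert a F ha ih =>
    rw [Finset.set_biUnion_insert] at h
    rcases (isPreirreducible_iff_isClosed_union_isClosed.mp hs.2) (f a)
        (⋃ i ∈ F, f i) (hf a) (F.finite_toSet.isClosed_biUnion fun i _ => hf i) h with h1 | h2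
    · exact ⟨a, Finset.mem_insert_self a F, h1⟩
    · obtain ⟨i, hiF, hsi⟩ := ih h2
      exact ⟨i, Finset.mem_insert_of_mem hiF, hsi⟩

theorem wild_iff_cycle_and_wild_on_components
    {X : Type*} [TopologicalSpace X] [Nonempty X]
    (m : ℕ) (hm : 0 < m) (C : Fin m → Set X)
    (hCinj : Function.Injective C)
    (hC : Set.range C = irreducibleComponents X)
    (σ : X ≃ₜ X) :
    (IsWild σ ↔
      ((∀ i j : Fin m, ∃ t : ℕ, (⇑σ)^[t] '' C i = C j) ∧
        ∀ i : Fin m, WildOn ((⇑σ)^[m]) (C i))) ∧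
    (IsWild σ → ∀ i j : Fin m, i ≠ j → Disjoint (C i) (C j)) := by
  classical
  -- basic facts about the components
  have hmemC : ∀ i, Maximal IsIrreducible (C i) := fun i =>
    (hC ▸ Set.mem_range_self i : C i ∈ irreducibleComponents X)
  have hCcl : ∀ i, IsClosed (C i) := fun i =>
    isClosed_of_mem_irreducibleComponents _ (hC ▸ Set.mem_range_self i)
  have hCirr : ∀ i, IsIrreducible (C i) := fun i => (hmemC i).1
  have hle : ∀ i j : Fin m, C i ⊆ C j → i = j := fun i j h =>
    hCinj (le_antisymm h ((hmemC i).2 (hCirr j) h))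
  have hcover : (⋃ i, C i) = Set.univ := by
    apply Set.eq_univ_of_forall
    intro x
    have hmem : irreducibleComponent x ∈ Set.range C := by
      rw [hC]; exact irreducibleComponent_mem_irreducibleComponents x
    obtain ⟨i, hi⟩ := hmem
    exact Set.mem_iUnion.mpr ⟨i, hi ▸ mem_irreducibleComponent⟩
  -- the induced permutation π of the components
  have hcomp_img : ∀ i, ∃ j, σ '' C i = C j := by
    intro i
    have hmem : σ '' C i ∈ irreducibleComponents X := by
      constructor
      · exact (hCirr i).image _ σ.continuous.continuousOn
      · intro s hs hsub
        have h1 : C i ⊆ σ.symm '' s := fun x hx =>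
          ⟨σ x, hsub ⟨x, hx, rfl⟩, σ.symm_apply_apply x⟩
        have h2 : σ.symm '' s ⊆ C i :=
          (hmemC i).2 (hs.image _ σ.symm.continuous.continuousOn) h1
        intro y hy
        exact ⟨σ.symm y, h2 ⟨y, hy, rfl⟩, σ.apply_symm_apply y⟩
    rw [← hC] at hmem
    obtain ⟨j, hj⟩ := hmem
    exact ⟨j, hj.symm⟩
  choose π hπ using hcomp_img
  have hπinj : Function.Injective π := by
    intro a b hab
    apply hCinj
    apply Set.image_injective.mpr σ.injective
    rw [hπ a, hπ b, hab]
  have hiter : ∀ (t : ℕ) (i : Fin m), (⇑σ)^[t] '' C i = C (π^[t] i) := by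
    intro t
    induction t with
    | zero => simp
    | succ t ih =>
      intro i
      rw [Function.iterate_succ' (⇑σ) t, Set.image_comp, ih i, hπ,
        Function.iterate_succ_apply' π t i]
  have hitercl : ∀ (t : ℕ) (s : Set X), IsClosed s → IsClosed ((⇑σ)^[t] '' s) := by
    intro t
    induction t with
    | zero => simpa using fun s hs => hs
    | succ t ih =>
      intro s hs
      rw [Function.iterate_succ' (⇑σ) t, Set.image_comp]
      exact σ.isClosedMap _ (ih s hs)
  -- key consequence of wildness
  have key : IsWild σ → ∀ Z : Set X, IsClosed Z → Z.Nonempty → σ '' Z = Z →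
      Z = Set.univ := by
    intro hw Z h1 h2 h3
    by_contra hne
    exact hw Z (Set.subset_univ Z) h1 h2 hne h3
  -- forward: wildness implies transitivity on components
  have fwd_trans : IsWild σ → ∀ i j : Fin m, ∃ t : ℕ, (⇑σ)^[t] '' C i = C j := by
    intro hw i j
    set O : Finset (Fin m) := Finset.univ.filter (fun k => ∃ t : ℕ, π^[t] i = k) with hO
    have hiO : i ∈ O := by
      simp only [hO, Finset.mem_filter, Finset.mem_univ, true_and]
      exact ⟨0, rfl⟩
    have hπO : ∀ k ∈ O, π k ∈ O := by
      intro k hk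
      simp only [hO, Finset.mem_filter, Finset.mem_univ, true_and] at hk ⊢
      obtain ⟨t, ht⟩ := hk
      exact ⟨t + 1, by rw [Function.iterate_succ_apply' π t i, ht]⟩
    have hOimg : O.image π = O := by
      apply Finset.eq_of_subset_of_card_le
      · intro k hk
        obtain ⟨k', hk', rfl⟩ := Finset.mem_image.mp hk
        exact hπO k' hk'
      · rw [Finset.card_image_of_injective _ hπinj]
    set Z : Set X := ⋃ k ∈ O, C k with hZ
    have hZcl : IsClosed Z := O.finite_toSet.isClosed_biUnion fun k _ => hCcl k
    have hZne : Z.Nonempty := by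
      obtain ⟨x, hx⟩ := (hCirr i).1
      exact ⟨x, Set.mem_biUnion hiO hx⟩
    have hZinv : σ '' Z = Z := by
      rw [hZ, Set.image_iUnion₂]
      apply le_antisymm
      · intro x hx
        simp only [Set.mem_iUnion] at hx ⊢
        obtain ⟨k, hk, hx⟩ := hx
        rw [hπ k] at hx
        exact ⟨π k, hπO k hk, hx⟩
      · intro x hx
        simp only [Set.mem_iUnion] at hx ⊢
        obtain ⟨k, hk, hx⟩ := hx
        have hk2 : k ∈ O.image π := by rw [hOimg]; exact hk
        obtain ⟨k', hk', rfl⟩ := Finset.mem_image.mp hk2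
        exact ⟨k', hk', by rw [hπ k']; exact hx⟩
    have hZuniv : Z = Set.univ := key hw Z hZcl hZne hZinv
    have hjZ : C j ⊆ Z := by rw [hZuniv]; exact Set.subset_univ _
    obtain ⟨k, hkO, hjk⟩ := irr_subset_of_subset_biUnion (hCirr j) O C hCcl hjZ
    have hjk' : j = k := hle j k hjk
    simp only [hO, Finset.mem_filter, Finset.mem_univ, true_and] at hkO
    obtain ⟨t, ht⟩ := hkO
    exact ⟨t, by rw [hiter t i, ht, hjk']⟩
  -- forward: wildness implies σ^m is wild on each component
  have fwd_wildon : IsWild σ → ∀ i : Fin m, WildOn ((⇑σ)^[m]) (C i) := by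
    intro hw i Y hYsub hYcl hYne hYneq heq
    set Z : Set X := ⋃ t ∈ Finset.range m, (⇑σ)^[t] '' Y with hZ
    have hZcl : IsClosed Z := (Finset.range m).finite_toSet.isClosed_biUnion
      fun t _ => hitercl t Y hYcl
    have hZne : Z.Nonempty := by
      obtain ⟨y, hy⟩ := hYne
      exact ⟨y, Set.mem_biUnion (Finset.mem_range.mpr hm) (by simpa using hy)⟩
    have hZinv : σ '' Z = Z := by
      rw [hZ, Set.image_iUnion₂]
      apply le_antisymm
      · intro x hx
        simp only [Set.mem_iUnion] at hx ⊢
        obtain ⟨t, ht, hx⟩ := hx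
        rw [← Set.image_comp, ← Function.iterate_succ' (⇑σ) t] at hx
        rcases lt_or_eq_of_le (Nat.succ_le_of_lt (Finset.mem_range.mp ht)) with h | h
        · exact ⟨t + 1, Finset.mem_range.mpr h, hx⟩
        · rw [h, heq] at hx
          exact ⟨0, Finset.mem_range.mpr hm, by simpa using hx⟩
      · intro x hx
        simp only [Set.mem_iUnion] at hx ⊢
        obtain ⟨t, ht, hx⟩ := hx
        cases t with
        | zero =>
          rw [Function.iterate_zero, Set.image_id] at hx
          obtain ⟨k, hk⟩ : ∃ k, m = k + 1 := ⟨m - 1, by omega⟩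
          rw [← heq, hk, Function.iterate_succ' (⇑σ) k, Set.image_comp] at hx
          obtain ⟨z, hz, hzx⟩ := hx
          exact ⟨k, Finset.mem_range.mpr (by omega), z, hz, hzx⟩
        | succ s =>
          rw [Function.iterate_succ' (⇑σ) s, Set.image_comp] at hx
          obtain ⟨z, hz, hzx⟩ := hx
          have ht' : s < m := by
            have := Finset.mem_range.mp ht; omega
          exact ⟨s, Finset.mem_range.mpr ht', z, hz, hzx⟩
    have hZuniv : Z = Set.univ := key hw Z hZcl hZne hZinv
    have hiZ : C i ⊆ Z := by rw [hZuniv]; exact Set.subset_univ _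
    obtain ⟨t, _, hit⟩ := irr_subset_of_subset_biUnion (hCirr i) (Finset.range m)
      (fun t => (⇑σ)^[t] '' Y) (fun t => hitercl t Y hYcl) hiZ
    have hsub2 : (⇑σ)^[t] '' Y ⊆ C (π^[t] i) := by
      rw [← hiter t i]; exact Set.image_mono hYsub
    have heqi : π^[t] i = i := (hle i (π^[t] i) (hit.trans hsub2)).symm
    have hYeq : (⇑σ)^[t] '' Y = (⇑σ)^[t] '' C i := by
      apply le_antisymm
      · rw [heqi] at hsub2
        rw [hiter t i, heqi]
        exact hsub2
      · rw [hiter t i, heqi]; exact hit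
    exact hYneq (Function.Injective.image_injective (σ.injective.iterate t) hYeq)
  -- forward: wildness implies the components are pairwise disjoint
  have fwd_disj : IsWild σ → ∀ i j : Fin m, i ≠ j → Disjoint (C i) (C j) := by
    intro hw i j hij
    rw [Set.disjoint_iff_inter_eq_empty]
    by_contra hne
    obtain ⟨x, hx⟩ := Set.nonempty_iff_ne_empty.mpr hne
    set q : Fin m × Fin m → Fin m × Fin m := fun p => (π p.1, π p.2) with hq
    have hqinj : Function.Injective q := by
      intro a b hab
      simp only [hq, Prod.mk.injEq] at hab
      exact Prod.ext (hπinj hab.1) (hπinj hab.2)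
    set P : Finset (Fin m × Fin m) :=
      Finset.univ.filter (fun p => ∃ t : ℕ, (π^[t] i, π^[t] j) = p) with hP
    have hijP : (i, j) ∈ P := by
      simp only [hP, Finset.mem_filter, Finset.mem_univ, true_and]
      exact ⟨0, rfl⟩
    have hqP : ∀ p ∈ P, q p ∈ P := by
      intro p hp
      simp only [hP, Finset.mem_filter, Finset.mem_univ, true_and] at hp ⊢
      obtain ⟨t, ht⟩ := hp
      refine ⟨t + 1, ?_⟩
      rw [Function.iterate_succ_apply' π t i, Function.iterate_succ_apply' π t j, ← ht]
    have hPimg : P.image q = P := by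
      apply Finset.eq_of_subset_of_card_le
      · intro p hp
        obtain ⟨p', hp', rfl⟩ := Finset.mem_image.mp hp
        exact hqP p' hp'
      · rw [Finset.card_image_of_injective _ hqinj]
    have hPne : ∀ p ∈ P, p.1 ≠ p.2 := by
      intro p hp
      simp only [hP, Finset.mem_filter, Finset.mem_univ, true_and] at hp
      obtain ⟨t, ht⟩ := hp
      rw [← ht]
      intro h
      exact hij ((hπinj.iterate t) h)
    set Z : Set X := ⋃ p ∈ P, C p.1 ∩ C p.2 with hZ
    have hZcl : IsClosed Z := P.finite_toSet.isClosed_biUnion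
      fun p _ => (hCcl p.1).inter (hCcl p.2)
    have hZne : Z.Nonempty := ⟨x, Set.mem_biUnion hijP hx⟩
    have himg_inter : ∀ p : Fin m × Fin m,
        σ '' (C p.1 ∩ C p.2) = C (π p.1) ∩ C (π p.2) := by
      intro p
      rw [Set.image_inter σ.injective, hπ, hπ]
    have hZinv : σ '' Z = Z := by
      rw [hZ, Set.image_iUnion₂]
      apply le_antisymm
      · intro y hy
        simp only [Set.mem_iUnion] at hy ⊢
        obtain ⟨p, hp, hy⟩ := hy
        rw [himg_inter p] at hy
        exact ⟨q p, hqP p hp, hy⟩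
      · intro y hy
        simp only [Set.mem_iUnion] at hy ⊢
        obtain ⟨p, hp, hy⟩ := hy
        have hp2 : p ∈ P.image q := by rw [hPimg]; exact hp
        obtain ⟨p', hp', rfl⟩ := Finset.mem_image.mp hp2
        exact ⟨p', hp', by rw [himg_inter p']; exact hy⟩
    have hZuniv : Z = Set.univ := key hw Z hZcl hZne hZinv
    have hiZ : C i ⊆ Z := by rw [hZuniv]; exact Set.subset_univ _
    obtain ⟨p, hp, hip⟩ := irr_subset_of_subset_biUnion (hCirr i) P
      (fun p => C p.1 ∩ C p.2) (fun p => (hCcl p.1).inter (hCcl p.2)) hiZ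
    have h1 : i = p.1 := hle i p.1 (hip.trans Set.inter_subset_left)
    have h2 : i = p.2 := hle i p.2 (hip.trans Set.inter_subset_right)
    exact hPne p hp (h1 ▸ h2 ▸ rfl)
  -- reverse direction
  have rev : ((∀ i j : Fin m, ∃ t : ℕ, (⇑σ)^[t] '' C i = C j) ∧
      ∀ i : Fin m, WildOn ((⇑σ)^[m]) (C i)) → IsWild σ := by
    rintro ⟨htrans, hwo⟩
    -- translate transitivity to the permutation π
    have htransπ : ∀ i j : Fin m, ∃ t : ℕ, π^[t] i = j := by
      intro i j
      obtain ⟨t, ht⟩ := htrans i j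
      exact ⟨t, hCinj (by rw [← hiter t i, ht])⟩
    -- π^[m] = id
    have hπbij : Function.Bijective π := Finite.injective_iff_bijective.mp hπinj
    set e : Equiv.Perm (Fin m) := Equiv.ofBijective π hπbij with he
    have hecoe : ∀ (t : ℕ) (i : Fin m), (e ^ t) i = π^[t] i := by
      intro t
      induction t with
      | zero => simp
      | succ t ih =>
        intro i
        rw [pow_succ, Equiv.Perm.mul_apply, Function.iterate_succ_apply π t i]
        exact ih (π i)
    have htranse : ∀ i j : Fin m, ∃ t : ℕ, (e ^ t) i = j := by
      intro i j
      obtain ⟨t, ht⟩ := htransπ i j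
      exact ⟨t, by rw [hecoe]; exact ht⟩
    have hstab : ∀ (a : ℕ) (i : Fin m), (e ^ a) i = i → e ^ a = 1 := by
      intro a i h
      refine Equiv.ext fun j => ?_
      rw [Equiv.Perm.one_apply]
      obtain ⟨t, ht⟩ := htranse i j
      have hcomm : e ^ a * e ^ t = e ^ t * e ^ a := pow_mul_comm e a t
      calc (e ^ a) j = (e ^ a) ((e ^ t) i) := by rw [ht]
        _ = (e ^ a * e ^ t) i := rfl
        _ = (e ^ t * e ^ a) i := by rw [hcomm]
        _ = (e ^ t) i := by rw [Equiv.Perm.mul_apply, h]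
        _ = j := ht
      
    have hNpos : 0 < orderOf e := orderOf_pos e
    set i₀ : Fin m := ⟨0, hm⟩ with hi₀
    have hNm : orderOf e = m := by
      have key2 : ∀ s t : Fin (orderOf e), (s : ℕ) ≤ (t : ℕ) →
          (e ^ (s : ℕ)) i₀ = (e ^ (t : ℕ)) i₀ → s = t := by
        intro s t hle' hst
        have h1 : (e ^ ((t : ℕ) - (s : ℕ))) ((e ^ (s : ℕ)) i₀) = (e ^ (s : ℕ)) i₀ := by
          rw [← Equiv.Perm.mul_apply, ← pow_add, Nat.sub_add_cancel hle']
          exact hst.symm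
        have h2 : e ^ ((t : ℕ) - (s : ℕ)) = 1 := hstab _ _ h1
        have h3 : orderOf e ∣ (t : ℕ) - (s : ℕ) := orderOf_dvd_of_pow_eq_one h2
        have h4 : (t : ℕ) - (s : ℕ) < orderOf e := by
          have := t.isLt; omega
        have h5 : (t : ℕ) - (s : ℕ) = 0 := by
          by_contra h0
          exact absurd (Nat.le_of_dvd (Nat.pos_of_ne_zero h0) h3) (not_le.mpr h4)
        exact Fin.ext (by omega)
      have hinj : Function.Injective (fun t : Fin (orderOf e) => (e ^ (t : ℕ)) i₀) := by
        intro s t hst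
        simp only at hst
        rcases le_total (s : ℕ) (t : ℕ) with h | h
        · exact key2 s t h hst
        · exact (key2 t s h hst.symm).symm
      have hsurj : Function.Surjective (fun t : Fin (orderOf e) => (e ^ (t : ℕ)) i₀) := by
        intro j
        obtain ⟨t, ht⟩ := htranse i₀ j
        refine ⟨⟨t % orderOf e, Nat.mod_lt _ hNpos⟩, ?_⟩
        show (e ^ (t % orderOf e)) i₀ = j
        rw [pow_mod_orderOf]
        exact ht
      have hcard := Fintype.card_of_bijective ⟨hinj, hsurj⟩
      simpa using hcard
    have hπm : ∀ i : Fin m, π^[m] i = i := by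
      intro i
      have h1 : e ^ m = 1 := by
        have h2 := pow_orderOf_eq_one e
        rwa [hNm] at h2
      rw [← hecoe m i, h1]
      rfl
    -- now prove the wildness of σ
    intro Y _ hYcl hYne hYneq heq
    have hYiter : ∀ t : ℕ, (⇑σ)^[t] '' Y = Y := by
      intro t
      induction t with
      | zero => simp
      | succ t ih => rw [Function.iterate_succ' (⇑σ) t, Set.image_comp, ih, heq]
    have hcomp : ∀ i : Fin m, (Y ∩ C i).Nonempty → C i ⊆ Y := by
      intro i hne
      by_contra hsub
      have hWm : (⇑σ)^[m] '' (Y ∩ C i) = Y ∩ C i := by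
        rw [Set.image_inter (σ.injective.iterate m), hYiter m, hiter m i, hπm i]
      have hWne : Y ∩ C i ≠ C i := by
        intro h
        exact hsub (by rw [← h]; exact Set.inter_subset_left)
      exact hwo i (Y ∩ C i) Set.inter_subset_right (hYcl.inter (hCcl i)) hne hWne hWm
    obtain ⟨y, hy⟩ := hYne
    have hy2 : y ∈ ⋃ i, C i := by rw [hcover]; exact Set.mem_univ y
    obtain ⟨i₁, hi₁⟩ := Set.mem_iUnion.mp hy2
    have h0 : C i₁ ⊆ Y := hcomp i₁ ⟨y, hy, hi₁⟩
    have hall : ∀ j, C j ⊆ Y := by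
      intro j
      obtain ⟨t, ht⟩ := htrans i₁ j
      rw [← ht]
      calc (⇑σ)^[t] '' C i₁ ⊆ (⇑σ)^[t] '' Y := Set.image_mono h0
        _ = Y := hYiter t
    apply hYneq
    apply Set.eq_univ_of_univ_subset
    rw [← hcover]
    exact Set.iUnion_subset hall
  refine ⟨⟨fun hw => ⟨fwd_trans hw, fwd_wildon hw⟩, rev⟩, fwd_disj⟩
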